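/- Let p + p²/N < q < p^* (so qγ_q > p) and suppose G, Q, P ≥ 0 with Q + P > 0, μ > 0, satisfy G = μγ_q Q + P and p G = μ q γ_q² Q + p^* P. Then μγ_q(qγ_q − p) Q + (p^* − p) P = 0, which forces Q = P = 0, a contradiction. Hence 𝒫⁰ is empty in the supercritical regime. -/

import Mathlib

/-- `𝒫⁰ = ∅` in the supercritical regime `p + p²/N < q < p*` (so `qγ_q > p`): there is no
`G, Q, P` with `Q, P > 0` satisfying both `G = μγ_q Q + P` and `pG = μqγ_q² Q + p* P`. -/
theorem stmt_14 (N p q μ G Q P : ℝ) (hp : 1 < p) (hpN : p < N)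
    (hq1 : p + p ^ 2 / N < q) (hq2 : q < N * p / (N - p)) (hμ : 0 < μ)
    (hQ : 0 < Q) (hP : 0 < P)
    (heq : G = μ * (N * (q - p) / (p * q)) * Q + P)
    (heq2 : p * G = μ * q * (N * (q - p) / (p * q)) ^ 2 * Q + (N * p / (N - p)) * P) :
    False := by
  have hp0 : 0 < p := by linarith
  have hN0 : 0 < N := by linarith
  have hNp : 0 < N - p := by linarith
  have hq0 : 0 < q := by nlinarith [div_nonneg (sq_nonneg p) hN0.le]
  set γ := N * (q - p) / (p * q) with hγ
  -- q * γ = N * (q - p) / p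
  have hqγ : q * γ = N * (q - p) / p := by
    field_simp [hγ]
    rw [hγ]; field_simp
  have hkey : N * (q - p) > p ^ 2 := by
    have := (div_lt_iff₀ hN0).mp (by linarith : p ^ 2 / N < q - p)
    linarith [this]
  have hqγp : q * γ > p := by
    rw [hqγ, gt_iff_lt, lt_div_iff₀ hp0]
    nlinarith
  have hqp : p < q := by nlinarith [div_nonneg (sq_nonneg p) hN0.le]
  have hγpos : 0 < γ := by rw [hγ]; exact div_pos (by nlinarith) (by positivity)
  have hps : p < N * p / (N - p) := by
    rw [lt_div_iff₀ hNp]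
    nlinarith
  -- combine: p*heq - heq2
  have hcomb : μ * γ * (q * γ - p) * Q + (N * p / (N - p) - p) * P = 0 := by
    have h1 : p * G = p * (μ * γ * Q + P) := by rw [heq]
    have h2 := heq2
    nlinarith [h1, h2]
  nlinarith [mul_pos (mul_pos (mul_pos hμ hγpos) (by linarith : (0:ℝ) < q * γ - p)) hQ,
    mul_pos (by linarith : (0:ℝ) < N * p / (N - p) - p) hP]
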